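/- Let v : ℤ × ℝ → ℝ be differentiable in t and set r(n) = −v(n). Then the pair (v, r) satisfies the R-Toda(+1) lattice ∂_t v(n) = v(n)(r(n) − r(n−1)), ∂_t r(n) = r(n)(r(n+1) + v(n+1) − r(n−1) − v(n)) for all n ∈ ℤ if and only if v satisfies the differential-difference Burgers equation ∂_t v(n) = v(n)(v(n−1) − v(n)) for all n ∈ ℤ. -/

import Mathlib

/-- The one-field reduction `r = -v` of the R-Toda(+1) lattice is equivalent to
the differential-difference Burgers equation `v_t = v(v(n-1) - v(n))`. -/
theorem RToda_reduction_burgers_one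
    (v : ℤ → ℝ → ℝ) (hvd : ∀ n, Differentiable ℝ (v n)) :
    let r : ℤ → ℝ → ℝ := fun n t => -v n t
    ((∀ n t, deriv (v n) t = v n t * (r n t - r (n - 1) t)) ∧
     (∀ n t, deriv (r n) t
        = r n t * (r (n + 1) t + v (n + 1) t - r (n - 1) t - v n t)) ↔
     (∀ n t, deriv (v n) t = v n t * (v (n - 1) t - v n t))) := by
  intro r
  have hr : ∀ n t, deriv (r n) t = -deriv (v n) t := by
    intro n t
    show deriv (fun t => -v n t) t = _
    rw [deriv.fun_neg]
  constructor
  · rintro ⟨h1, _⟩ n t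
    have := h1 n t
    simp only [r] at this
    linarith [this]
  · intro h
    constructor
    · intro n t
      have := h n t
      simp only [r]
      linarith [this]
    · intro n t
      rw [hr n t, h n t]
      simp only [r]
      ring
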